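/- arXiv:1307.3678 — 4 statements merged into one kernel-verified Lean document; each statement's English description precedes it below -/
import Mathlib

section
/- For any disc B(z,r) in the complex plane and any point ω in B(z,r), the integral over B(z,r) of K(ω-ξ) with respect to 2-dimensional Lebesgue measure equals 0, where K(z) = z̄/z². -/
open MeasureTheory Metric Complex

noncomputable def K (z : ℂ) : ℂ := (starRingEnd ℂ) z / z ^ 2

open Real

noncomputable def cfun (w : ℂ) (θ : ℝ) : ℝ := (w * Complex.exp (-θ * I)).re

noncomputable def Sfun (w : ℂ) (r θ : ℝ) : ℝ :=
  Real.sqrt (cfun w θ ^ 2 + r ^ 2 - ‖w‖ ^ 2)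

noncomputable def Rfun (w : ℂ) (r θ : ℝ) : ℝ := -cfun w θ + Sfun w r θ

section
variable (w : ℂ) {r : ℝ}
lemma aux_Sfun_ge (hd : ‖w‖ ≤ r) (θ : ℝ) : |cfun w θ| ≤ Sfun w r θ := by
  unfold Sfun
  have h0 : (0:ℝ) ≤ ‖w‖ := norm_nonneg w
  have h1 : |cfun w θ| ≤ ‖w‖ := by
    unfold cfun
    calc |(w * Complex.exp (-θ * I)).re| ≤ ‖w * Complex.exp (-θ * I)‖ :=
          Complex.abs_re_le_norm _
      _ = ‖w‖ := by
          rw [norm_mul]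
          rw [show (-θ : ℂ) * I = (↑(-θ) : ℝ) * I by push_cast; ring,
            Complex.norm_exp_ofReal_mul_I, mul_one]
  calc |cfun w θ| = Real.sqrt ((cfun w θ) ^ 2) := (Real.sqrt_sq_eq_abs _).symm
    _ ≤ _ := Real.sqrt_le_sqrt (by nlinarith)

lemma aux_Sfun_sq (hd : ‖w‖ ≤ r) (θ : ℝ) :
    Sfun w r θ ^ 2 = cfun w θ ^ 2 + r ^ 2 - ‖w‖ ^ 2 := by
  have h0 : (0:ℝ) ≤ ‖w‖ := norm_nonneg w
  exact Real.sq_sqrt (by nlinarith)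

lemma aux_normSq (ρ θ : ℝ) :
    Complex.normSq (w + ρ * Complex.exp (θ * I)) =
      ‖w‖ ^ 2 + 2 * ρ * cfun w θ + ρ ^ 2 := by
  rw [Complex.normSq_add]
  have hconj : (starRingEnd ℂ) ((ρ:ℂ) * Complex.exp (θ * I))
      = (ρ:ℂ) * Complex.exp (-θ * I) := by
    rw [map_mul, Complex.conj_ofReal, ← Complex.exp_conj]
    congr 1
    simp
  rw [hconj]
  have h1 : (w * ((ρ:ℂ) * Complex.exp (-θ * I))).re = ρ * cfun w θ := by
    rw [show w * ((ρ:ℂ) * Complex.exp (-(θ:ℂ) * I)) = (ρ:ℂ) * (w * Complex.exp (-(θ:ℂ) * I))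
      by ring, Complex.re_ofReal_mul]
    rfl
  rw [h1, Complex.normSq_mul, Complex.normSq_ofReal, ← Complex.normSq_eq_norm_sq,
    ← Complex.sq_norm (Complex.exp _), Complex.norm_exp_ofReal_mul_I]
  ring

lemma aux_mem_iff (hr : 0 < r) (hd : ‖w‖ ≤ r) {ρ : ℝ} (hρ : 0 < ρ) (θ : ℝ) :
    ‖w + ρ * Complex.exp (θ * I)‖ ≤ r ↔ ρ ≤ Rfun w r θ := by
  have hS := aux_Sfun_sq w hd θ
  have hSge := abs_le.mp (aux_Sfun_ge w hd θ)
  have hkey : ‖w + ρ * Complex.exp (θ * I)‖ ≤ r ↔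
      ‖w‖ ^ 2 + 2 * ρ * cfun w θ + ρ ^ 2 ≤ r ^ 2 := by
    rw [← aux_normSq w ρ θ]
    have h2 := Complex.sq_norm (w + ρ * Complex.exp (θ * I))
    have h3 := norm_nonneg (w + ρ * Complex.exp (θ * I))
    constructor
    · intro h; nlinarith
    · intro h; nlinarith
  rw [hkey]
  unfold Rfun
  constructor
  · intro h
    by_contra h'
    push_neg at h'
    nlinarith
  · intro h
    nlinarith
end


lemma Rfun_nonneg (w : ℂ) {r : ℝ} (hd : ‖w‖ ≤ r) (θ : ℝ) :
    0 ≤ Rfun w r θ := by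
  have := aux_Sfun_ge w hd θ
  unfold Rfun
  linarith [le_abs_self (cfun w θ)]

lemma K_polar {ρ : ℝ} (hρ : 0 < ρ) (θ : ℝ) :
    ρ • K (-(ρ * Complex.exp (θ * I))) = -Complex.exp (-3 * θ * I) := by
  have hρ' : (ρ : ℂ) ≠ 0 := Complex.ofReal_ne_zero.mpr hρ.ne'
  have hE : ∀ a : ℂ, Complex.exp a ≠ 0 := Complex.exp_ne_zero
  rw [Complex.real_smul]
  unfold K
  have h1 : (starRingEnd ℂ) (-(↑ρ * Complex.exp (↑θ * I)))
      = -(↑ρ * Complex.exp (-↑θ * I)) := by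
    rw [map_neg, map_mul, Complex.conj_ofReal, ← Complex.exp_conj]
    congr 2
    simp
  rw [h1]
  rw [mul_div_assoc' , div_eq_iff (pow_ne_zero 2 (neg_ne_zero.mpr (mul_ne_zero hρ' (hE _))))]
  rw [show -Complex.exp (-3 * θ * I) * (-(↑ρ * Complex.exp (↑θ * I))) ^ 2
      = -(↑ρ^2 * (Complex.exp (-3 * θ * I) * Complex.exp (↑θ * I) * Complex.exp (↑θ * I))) by ring,
    ← Complex.exp_add, ← Complex.exp_add]
  rw [show (-3 * (θ:ℂ) * I + ↑θ * I + ↑θ * I) = -↑θ * I by ring]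
  ring

lemma cfun_cont (w : ℂ) : Continuous (cfun w) := by
  unfold cfun; fun_prop

lemma Sfun_cont (w : ℂ) (r : ℝ) : Continuous (Sfun w r) := by
  unfold Sfun
  exact Real.continuous_sqrt.comp ((((cfun_cont w).pow 2).add continuous_const).sub
    continuous_const)

lemma cfun_add_pi (w : ℂ) (θ : ℝ) : cfun w (θ + π) = -cfun w θ := by
  unfold cfun
  rw [show (-((θ + π : ℝ)) : ℂ) * I = -θ * I + (-π : ℝ) * I by push_cast; ring,
    Complex.exp_add]
  have h2 : Complex.exp ((-π : ℝ) * I) = -1 := by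
    rw [show ((-π : ℝ) : ℂ) * I = -(π * I) by push_cast; ring, Complex.exp_neg,
      Complex.exp_pi_mul_I]
    norm_num
  push_cast at h2 ⊢
  rw [h2]
  simp [Complex.neg_re]

lemma Sfun_add_pi (w : ℂ) (r θ : ℝ) : Sfun w r (θ + π) = Sfun w r θ := by
  unfold Sfun
  rw [cfun_add_pi, neg_sq]



lemma oneD (w : ℂ) {r : ℝ} (hd : ‖w‖ ≤ r) :
    ∫ θ in (-π)..π, Complex.exp (-3 * θ * I) * (Rfun w r θ : ℂ) = 0 := by
  have hcont1 : Continuous fun θ : ℝ => Complex.exp (-3 * θ * I) * ((-cfun w θ : ℝ) : ℂ) :=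
    Continuous.mul (by fun_prop) (Complex.continuous_ofReal.comp (cfun_cont w).neg)
  have hcont2 : Continuous fun θ : ℝ => Complex.exp (-3 * θ * I) * ((Sfun w r θ : ℝ) : ℂ) := by
    exact Continuous.mul (by fun_prop) (Complex.continuous_ofReal.comp (Sfun_cont w r))
  have hsplit : ∀ θ : ℝ, Complex.exp (-3 * θ * I) * (Rfun w r θ : ℂ)
      = Complex.exp (-3 * θ * I) * ((-cfun w θ : ℝ) : ℂ)
        + Complex.exp (-3 * θ * I) * ((Sfun w r θ : ℝ) : ℂ) := by
    intro θ
    unfold Rfun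
    push_cast
    ring
  rw [intervalIntegral.integral_congr (fun θ _ => hsplit θ),
    intervalIntegral.integral_add (hcont1.intervalIntegrable _ _)
      (hcont2.intervalIntegrable _ _)]
  have part1 : ∫ θ in (-π)..π, Complex.exp (-3 * θ * I) * ((-cfun w θ : ℝ) : ℂ) = 0 := by
    have hpt : ∀ θ : ℝ, Complex.exp (-3 * θ * I) * ((-cfun w θ : ℝ) : ℂ)
        = (-(1/2 : ℂ)) * (w * Complex.exp ((-4 * I) * θ))
          + (-(1/2 : ℂ)) * ((starRingEnd ℂ) w * Complex.exp ((-2 * I) * θ)) := by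
      intro θ
      have hre : ((cfun w θ : ℝ) : ℂ)
          = (w * Complex.exp (-θ * I) + (starRingEnd ℂ) (w * Complex.exp (-θ * I))) / 2 := by
        rw [Complex.add_conj]
        unfold cfun
        push_cast
        ring
      have hconj : (starRingEnd ℂ) (w * Complex.exp (-θ * I))
          = (starRingEnd ℂ) w * Complex.exp (θ * I) := by
        rw [map_mul, ← Complex.exp_conj]
        congr 2
        simp
      have e1 : Complex.exp ((-4 * I) * θ) = Complex.exp (-3 * θ * I) * Complex.exp (-θ * I) := by
        rw [← Complex.exp_add]; congr 1; ring
      have e2 : Complex.exp ((-2 * I) * θ) = Complex.exp (-3 * θ * I) * Complex.exp (θ * I) := by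
        rw [← Complex.exp_add]; congr 1; ring
      push_cast
      rw [hre, hconj, e1, e2]
      ring
    rw [intervalIntegral.integral_congr (fun θ _ => hpt θ)]
    have hi4 : IntervalIntegrable (fun θ : ℝ => w * Complex.exp ((-4 * I) * θ)) volume (-π) π :=
      (Continuous.intervalIntegrable (by fun_prop) _ _)
    have hi2 : IntervalIntegrable
        (fun θ : ℝ => (starRingEnd ℂ) w * Complex.exp ((-2 * I) * θ)) volume (-π) π :=
      (Continuous.intervalIntegrable (by fun_prop) _ _)
    rw [intervalIntegral.integral_add (hi4.const_mul _) (hi2.const_mul _),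
      intervalIntegral.integral_const_mul, intervalIntegral.integral_const_mul,
      intervalIntegral.integral_const_mul, intervalIntegral.integral_const_mul]
    rw [integral_exp_mul_complex (by simp : (-4 * I : ℂ) ≠ 0),
      integral_exp_mul_complex (by simp : (-2 * I : ℂ) ≠ 0)]
    have e1 : Complex.exp ((-4 * I) * (π:ℝ)) = 1 := by
      rw [show ((-4 * I) * (π:ℝ) : ℂ) = (-2 : ℤ) * (2 * π * I) by push_cast; ring]
      exact Complex.exp_int_mul_two_pi_mul_I (-2)
    have e2 : Complex.exp ((-4 * I) * ((-π : ℝ) : ℂ)) = 1 := by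
      rw [show ((-4 * I) * ((-π:ℝ) : ℂ) : ℂ) = (2 : ℤ) * (2 * π * I) by push_cast; ring]
      exact Complex.exp_int_mul_two_pi_mul_I 2
    have e3 : Complex.exp ((-2 * I) * (π:ℝ)) = 1 := by
      rw [show ((-2 * I) * (π:ℝ) : ℂ) = (-1 : ℤ) * (2 * π * I) by push_cast; ring]
      exact Complex.exp_int_mul_two_pi_mul_I (-1)
    have e4 : Complex.exp ((-2 * I) * ((-π : ℝ) : ℂ)) = 1 := by
      rw [show ((-2 * I) * ((-π:ℝ) : ℂ) : ℂ) = (1 : ℤ) * (2 * π * I) by push_cast; ring]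
      exact Complex.exp_int_mul_two_pi_mul_I 1
    rw [e1, e2, e3, e4]
    simp
  have part2 : ∫ θ in (-π)..π, Complex.exp (-3 * θ * I) * ((Sfun w r θ : ℝ) : ℂ) = 0 := by
    set f : ℝ → ℂ := fun θ => Complex.exp (-3 * θ * I) * ((Sfun w r θ : ℝ) : ℂ) with hf
    have hint : ∀ a b : ℝ, IntervalIntegrable f volume a b :=
      fun a b => hcont2.intervalIntegrable a b
    have hadj : (∫ θ in (-π)..(0:ℝ), f θ) + ∫ θ in (0:ℝ)..π, f θ = ∫ θ in (-π)..π, f θ :=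
      intervalIntegral.integral_add_adjacent_intervals (hint _ _) (hint _ _)
    have hshift : ∫ θ in (0:ℝ)..π, f θ = ∫ θ in (-π)..(0:ℝ), f (θ + π) := by
      rw [intervalIntegral.integral_comp_add_right f π]
      norm_num
    have hneg : ∀ θ : ℝ, f (θ + π) = -f θ := by
      intro θ
      rw [hf]
      simp only
      rw [Sfun_add_pi]
      rw [show (-3 * ((θ + π : ℝ) : ℂ) * I) = -3 * θ * I + (-2 : ℤ) * (2 * π * I) + π * I
        by push_cast; ring]
      rw [Complex.exp_add, Complex.exp_add, Complex.exp_int_mul_two_pi_mul_I,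
        Complex.exp_pi_mul_I]
      ring
    rw [← hadj, hshift, intervalIntegral.integral_congr (fun θ _ => hneg θ),
      intervalIntegral.integral_neg]
    exact add_neg_cancel _
  rw [part1, part2, add_zero]

lemma polar_symm_eq (p : ℝ × ℝ) :
    Complex.polarCoord.symm p = ↑p.1 * Complex.exp (↑p.2 * I) := by
  rw [Complex.polarCoord_symm_apply, Complex.exp_mul_I, ← Complex.ofReal_cos,
    ← Complex.ofReal_sin]

theorem stmt0 (z : ℂ) (r : ℝ) (hr : 0 < r) (ω : ℂ) (hω : ω ∈ closedBall z r) :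
    ∫ ξ in closedBall z r, K (ω - ξ) ∂volume = 0 := by
  classical
  have hπ : (0:ℝ) < π := Real.pi_pos
  set w : ℂ := ω - z with hw
  have hd : ‖w‖ ≤ r := by
    rw [hw, ← Complex.dist_eq]
    exact mem_closedBall.mp hω
  set f : ℂ → ℂ := fun η => if ω + η ∈ closedBall z r then K (-η) else 0 with hf
  set g : ℝ × ℝ → ℂ := fun p =>
    if ω + ↑p.1 * Complex.exp (↑p.2 * I) ∈ closedBall z r
      then -Complex.exp (-3 * p.2 * I) else 0 with hg
  have hgnorm : ∀ p : ℝ × ℝ, ‖g p‖ ≤ 1 := by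
    intro p
    rw [hg]
    by_cases h : ω + ↑p.1 * Complex.exp (↑p.2 * I) ∈ closedBall z r
    · simp only [h, if_pos, norm_neg, Complex.norm_exp]
      simp
    · simp [h]
  -- step 1
  have step1 : ∫ ξ in closedBall z r, K (ω - ξ) ∂volume = ∫ η, f η := by
    rw [← integral_indicator (measurableSet_closedBall)]
    rw [← integral_add_left_eq_self
      (fun ξ => (closedBall z r).indicator (fun ξ' => K (ω - ξ')) ξ) ω]
    congr 1
    funext η
    rw [Set.indicator_apply, hf]
    by_cases h : ω + η ∈ closedBall z r <;>
      simp [h, show ω - (ω + η) = -η from by ring]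
  -- step 2 & 3 : polar coordinates
  have step2 : ∫ η, f η = ∫ p in Set.Ioi (0:ℝ) ×ˢ Set.Ioo (-π) π, g p := by
    rw [← Complex.integral_comp_polarCoord_symm f,
      show polarCoord.target = Set.Ioi (0:ℝ) ×ˢ Set.Ioo (-π) π from rfl]
    apply setIntegral_congr_fun (measurableSet_Ioi.prod measurableSet_Ioo)
    intro p hp
    have hp1 : 0 < p.1 := hp.1
    show p.1 • f (Complex.polarCoord.symm p) = g p
    rw [polar_symm_eq p, hf, hg]
    by_cases h : ω + ↑p.1 * Complex.exp (↑p.2 * I) ∈ closedBall z r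
    · simp only [h, if_pos]
      exact K_polar hp1 p.2
    · simp [h]
  -- integrability for Fubini
  have hA : MeasurableSet {p : ℝ × ℝ | ω + ↑p.1 * Complex.exp (↑p.2 * I) ∈ closedBall z r} := by
    have hc : Continuous fun p : ℝ × ℝ => ω + ↑p.1 * Complex.exp (↑p.2 * I) := by fun_prop
    exact hc.measurable measurableSet_closedBall
  have hgmeas : AEStronglyMeasurable g volume := by
    have : g = Set.indicator {p : ℝ × ℝ | ω + ↑p.1 * Complex.exp (↑p.2 * I) ∈ closedBall z r}
        (fun p => -Complex.exp (-3 * p.2 * I)) := by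
      funext p
      rw [Set.indicator_apply, hg]
      rfl
    rw [this]
    exact ((Continuous.stronglyMeasurable (by fun_prop)).indicator hA).aestronglyMeasurable
  have hgint : IntegrableOn g (Set.Ioi (0:ℝ) ×ˢ Set.Ioo (-π) π) volume := by
    rw [show Set.Ioi (0:ℝ) = Set.Ioc 0 (2*r) ∪ Set.Ioi (2*r) from
      (Set.Ioc_union_Ioi_eq_Ioi (by linarith)).symm, Set.union_prod]
    apply IntegrableOn.union
    · apply Measure.integrableOn_of_bounded (M := 1)
      · rw [Measure.volume_eq_prod, Measure.prod_prod, Real.volume_Ioc, Real.volume_Ioo]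
        exact ENNReal.mul_ne_top ENNReal.ofReal_ne_top ENNReal.ofReal_ne_top
      · exact hgmeas
      · exact Filter.Eventually.of_forall hgnorm
    · have hzero : Set.EqOn g 0 (Set.Ioi (2*r) ×ˢ Set.Ioo (-π) π) := by
        intro p hp
        have hp1 : 2*r < p.1 := hp.1
        rw [hg]
        simp only [Pi.zero_apply, ite_eq_right_iff]
        intro hmem
        exfalso
        have h1 : ‖w + ↑p.1 * Complex.exp (↑p.2 * I)‖ ≤ r := by
          rw [show w + ↑p.1 * Complex.exp (↑p.2 * I)
            = (ω + ↑p.1 * Complex.exp (↑p.2 * I)) - z from by rw [hw]; ring, ← Complex.dist_eq]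
          exact mem_closedBall.mp hmem
        have h2 : ‖↑p.1 * Complex.exp (↑p.2 * I)‖ = p.1 := by
          rw [norm_mul, Complex.norm_exp_ofReal_mul_I, mul_one,
            Complex.norm_of_nonneg (by linarith)]
        have h4 : ‖↑p.1 * Complex.exp (↑p.2 * I)‖
            ≤ ‖w + ↑p.1 * Complex.exp (↑p.2 * I)‖ + ‖w‖ := by
          calc ‖↑p.1 * Complex.exp (↑p.2 * I)‖
              = ‖(w + ↑p.1 * Complex.exp (↑p.2 * I)) + (-w)‖ := by ring_nf
            _ ≤ _ := by
                rw [← norm_neg w] at *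
                exact norm_add_le _ _
        rw [h2] at h4
        linarith
      exact (integrableOn_congr_fun hzero (measurableSet_Ioi.prod measurableSet_Ioo)).mpr
        (integrableOn_zero)
  -- Fubini
  have hmeasrw : (volume : Measure (ℝ × ℝ)).restrict (Set.Ioi (0:ℝ) ×ˢ Set.Ioo (-π) π)
      = (volume.restrict (Set.Ioi (0:ℝ))).prod (volume.restrict (Set.Ioo (-π) π)) := by
    rw [Measure.prod_restrict, ← Measure.volume_eq_prod]
  have step3 : ∫ p in Set.Ioi (0:ℝ) ×ˢ Set.Ioo (-π) π, g p
      = ∫ θ in Set.Ioo (-π) π, ∫ ρ in Set.Ioi (0:ℝ), g (ρ, θ) := by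
    have hgint' : Integrable g
        ((volume.restrict (Set.Ioi (0:ℝ))).prod (volume.restrict (Set.Ioo (-π) π))) := by
      rw [← hmeasrw]; exact hgint
    calc ∫ p in Set.Ioi (0:ℝ) ×ˢ Set.Ioo (-π) π, g p
        = ∫ p, g p ∂((volume.restrict (Set.Ioi (0:ℝ))).prod
            (volume.restrict (Set.Ioo (-π) π))) := by rw [hmeasrw]
      _ = _ := integral_prod_symm g hgint'
  -- inner integral
  have inner : ∀ θ : ℝ, (∫ ρ in Set.Ioi (0:ℝ), g (ρ, θ))
      = -Complex.exp (-3 * θ * I) * ((Rfun w r θ : ℝ) : ℂ) := by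
    intro θ
    have hcong : Set.EqOn (fun ρ : ℝ => g (ρ, θ))
        ((Set.Ioc (0:ℝ) (Rfun w r θ)).indicator fun _ => -Complex.exp (-3 * θ * I))
        (Set.Ioi 0) := by
      intro ρ hρ
      have hρ' : (0:ℝ) < ρ := hρ
      have hiff : (ω + ↑ρ * Complex.exp (↑θ * I) ∈ closedBall z r)
          ↔ ρ ∈ Set.Ioc 0 (Rfun w r θ) := by
        rw [mem_closedBall, Complex.dist_eq,
          show ω + ↑ρ * Complex.exp (↑θ * I) - z = w + ↑ρ * Complex.exp (↑θ * I) from by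
            rw [hw]; ring,
          aux_mem_iff w hr hd hρ' θ]
        exact ⟨fun h => ⟨hρ', h⟩, fun h => h.2⟩
      rw [hg, Set.indicator_apply]
      simp only
      by_cases h : ρ ∈ Set.Ioc 0 (Rfun w r θ)
      · rw [if_pos (hiff.mpr h), if_pos h]
      · rw [if_neg (fun hh => h (hiff.mp hh)), if_neg h]
    rw [setIntegral_congr_fun measurableSet_Ioi hcong,
      setIntegral_indicator measurableSet_Ioc,
      show Set.Ioi (0:ℝ) ∩ Set.Ioc 0 (Rfun w r θ) = Set.Ioc 0 (Rfun w r θ) from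
        Set.inter_eq_self_of_subset_right (fun x hx => hx.1),
      setIntegral_const, Real.volume_real_Ioc, sub_zero,
      max_eq_left (Rfun_nonneg w hd θ), Complex.real_smul]
    ring
  rw [step1, step2, step3]
  calc (∫ θ in Set.Ioo (-π) π, ∫ ρ in Set.Ioi (0:ℝ), g (ρ, θ))
      = ∫ θ in Set.Ioo (-π) π, -Complex.exp (-3 * θ * I) * ((Rfun w r θ : ℝ) : ℂ) :=
        setIntegral_congr_fun measurableSet_Ioo (fun θ _ => inner θ)
    _ = ∫ θ in (-π)..π, -Complex.exp (-3 * θ * I) * ((Rfun w r θ : ℝ) : ℂ) := by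
        rw [intervalIntegral.integral_of_le (by linarith), integral_Ioc_eq_integral_Ioo]
    _ = -∫ θ in (-π)..π, Complex.exp (-3 * θ * I) * ((Rfun w r θ : ℝ) : ℂ) := by
        rw [← intervalIntegral.integral_neg]
        apply intervalIntegral.integral_congr
        intro θ _
        ring
    _ = 0 := by rw [oneD w hd, neg_zero]
end

section
/- For ω in the complex plane with 0 < t < |ω|, the integral of K(ω-ξ) over the circle ∂B(0,t) with respect to arclength measure equals (2π/ω³)(t|ω|² - 2t³), where K(z) = z̄/z². -/
open MeasureTheory Metric Complex Real

set_option maxHeartbeats 2000000 in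
/-- For `0 < t < |ω|`, the integral of `K(ω - ξ)` over the circle `∂B(0,t)` with respect to
arclength measure equals `(2π/ω³)(t|ω|² - 2t³)`. -/
theorem stmt2 (ω : ℂ) (t : ℝ) (ht : 0 < t) (htω : t < ‖ω‖) :
    ∫ θ in (0:ℝ)..(2 * π), K (ω - t * Complex.exp (θ * Complex.I)) * (t : ℂ)
      = (2 * π / ω ^ 3) * ((t : ℂ) * (‖ω‖ : ℂ) ^ 2 - 2 * (t : ℂ) ^ 3) := by
  have hω : ω ≠ 0 := by
    intro h
    rw [h] at htω
    simp at htω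
    linarith
  have hT : (t : ℂ) ≠ 0 := by exact_mod_cast ht.ne'
  set c : ℂ := (starRingEnd ℂ) ω with hc
  set A : ℂ := (c * ω - 2 * (t:ℂ)^2) / ω^3 with hA
  set B : ℂ := -(t:ℂ)^2 / ω^2 with hB
  set D : ℂ := (c * ω - (t:ℂ)^2) / ω^2 with hD
  set g : ℝ → ℂ := fun θ => (t:ℂ) * A * (θ:ℂ) + ((t:ℂ) / I) *
      (-B / ((t:ℂ) * Complex.exp ((θ:ℂ) * I)) + D / (ω - (t:ℂ) * Complex.exp ((θ:ℂ) * I))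
        - A * Complex.log (1 - (t:ℂ) * Complex.exp ((θ:ℂ) * I) / ω)) with hg
  have hωz : ∀ θ : ℝ, ω - (t:ℂ) * Complex.exp ((θ:ℂ) * I) ≠ 0 := by
    intro θ h
    have h2 : ω = (t:ℂ) * Complex.exp ((θ:ℂ) * I) := by linear_combination h
    have : ‖ω‖ = t := by
      rw [h2]
      simp [Complex.norm_exp, abs_of_pos ht]
    linarith
  have key : ∀ θ : ℝ, HasDerivAt g (K (ω - t * Complex.exp (θ * Complex.I)) * t) θ := by
    intro θ
    have hE : Complex.exp ((θ:ℂ) * I) ≠ 0 := Complex.exp_ne_zero _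
    have hz : (t:ℂ) * Complex.exp ((θ:ℂ) * I) ≠ 0 := mul_ne_zero hT hE
    have hu := hωz θ
    have hEd : HasDerivAt (fun θ : ℝ => Complex.exp ((θ:ℂ) * I))
        (I * Complex.exp ((θ:ℂ) * I)) θ := by
      have h1 : HasDerivAt (fun x : ℂ => Complex.exp (x * I))
          (I * Complex.exp ((θ:ℂ) * I)) (θ:ℂ) := by
        have := ((hasDerivAt_id ((θ:ℂ))).mul_const I).cexp
        simpa [mul_comm] using this
      exact h1.comp_ofReal
    have hzd : HasDerivAt (fun θ : ℝ => (t:ℂ) * Complex.exp ((θ:ℂ) * I))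
        ((t:ℂ) * (I * Complex.exp ((θ:ℂ) * I))) θ := hEd.const_mul _
    have hslit : 1 - (t:ℂ) * Complex.exp ((θ:ℂ) * I) / ω ∈ Complex.slitPlane := by
      refine Complex.mem_slitPlane_iff.mpr (Or.inl ?_)
      have habs : ‖(t:ℂ) * Complex.exp ((θ:ℂ) * I) / ω‖ = t / ‖ω‖ := by
        simp [map_div₀, Complex.norm_exp, abs_of_pos ht]
      have hre : ((t:ℂ) * Complex.exp ((θ:ℂ) * I) / ω).re ≤ t / ‖ω‖ := by
        calc ((t:ℂ) * Complex.exp ((θ:ℂ) * I) / ω).re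
            ≤ ‖(t:ℂ) * Complex.exp ((θ:ℂ) * I) / ω‖ := Complex.re_le_norm _
          _ = t / ‖ω‖ := habs
      have hlt : t / ‖ω‖ < 1 := by
        rw [div_lt_one (by linarith)]
        exact htω
      simp only [Complex.sub_re, Complex.one_re]
      linarith
    have h1 : HasDerivAt (fun θ : ℝ => (t:ℂ) * A * (θ:ℂ)) ((t:ℂ) * A) θ := by
      simpa using ((hasDerivAt_id ((θ:ℂ))).const_mul ((t:ℂ) * A)).comp_ofReal
    have h2 := (hasDerivAt_const θ (-B)).div hzd hz
    have h3 := (hasDerivAt_const θ D).div ((hasDerivAt_const θ ω).sub hzd) hu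
    have hin : HasDerivAt (fun θ : ℝ => 1 - (t:ℂ) * Complex.exp ((θ:ℂ) * I) / ω)
        (0 - (t:ℂ) * (I * Complex.exp ((θ:ℂ) * I)) / ω) θ :=
      (hasDerivAt_const θ (1:ℂ)).sub (hzd.div_const ω)
    have h4 := (hin.clog_real hslit).const_mul A
    have hsum := h1.add (((h2.add h3).sub h4).const_mul ((t:ℂ) / I))
    convert hsum using 1
    · rfl
    · rfl
    rw [K]
    rw [map_sub, map_mul, Complex.conj_ofReal, ← Complex.exp_conj]
    have hconj : (starRingEnd ℂ) ((θ:ℂ) * I) = -((θ:ℂ) * I) := by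
      simp [Complex.conj_ofReal]
    rw [hconj, Complex.exp_neg]
    rw [hA, hB, hD, ← hc]
    set E : ℂ := Complex.exp ((θ:ℂ) * I) with hEdef
    -- clean form of the left-hand side
    have eL : (c - (t:ℂ) * E⁻¹) / (ω - (t:ℂ) * E) ^ 2 * (t:ℂ)
        = (c * E - (t:ℂ)) * (t:ℂ) / (E * (ω - (t:ℂ) * E) ^ 2) := by
      rw [div_mul_eq_mul_div,
        div_eq_div_iff (pow_ne_zero 2 hu) (mul_ne_zero hE (pow_ne_zero 2 hu))]
      field_simp
    -- partial fraction identity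
    have auxEq : (c * E - (t:ℂ)) * (t:ℂ) / (E * (ω - (t:ℂ) * E) ^ 2)
        = (t:ℂ) * (c * ω - 2 * (t:ℂ) ^ 2) / ω ^ 3
          - (t:ℂ) ^ 2 / (ω ^ 2 * E)
          + (t:ℂ) ^ 2 * E * (c * ω - (t:ℂ) ^ 2) / (ω ^ 2 * (ω - (t:ℂ) * E) ^ 2)
          + (t:ℂ) ^ 2 * E * (c * ω - 2 * (t:ℂ) ^ 2) / (ω ^ 3 * (ω - (t:ℂ) * E)) := by
      have k1 : (ω:ℂ) ^ 3 ≠ 0 := pow_ne_zero 3 hω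
      have k2 : ω ^ 2 * E ≠ 0 := mul_ne_zero (pow_ne_zero 2 hω) hE
      have k3 : ω ^ 2 * (ω - (t:ℂ) * E) ^ 2 ≠ 0 :=
        mul_ne_zero (pow_ne_zero 2 hω) (pow_ne_zero 2 hu)
      have k4 : ω ^ 3 * (ω - (t:ℂ) * E) ≠ 0 := mul_ne_zero k1 hu
      have kL : E * (ω - (t:ℂ) * E) ^ 2 ≠ 0 := mul_ne_zero hE (pow_ne_zero 2 hu)
      rw [div_sub_div _ _ k1 k2, div_add_div _ _ (mul_ne_zero k1 k2) k3,
        div_add_div _ _ (mul_ne_zero (mul_ne_zero k1 k2) k3) k4,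
        div_eq_div_iff kL (mul_ne_zero (mul_ne_zero (mul_ne_zero k1 k2) k3) k4)]
      ring
    have e2 : (t:ℂ) / I * ((0 * ((t:ℂ) * E) - -(-(t:ℂ) ^ 2 / ω ^ 2) * ((t:ℂ) * (I * E)))
          / ((t:ℂ) * E) ^ 2)
        = -((t:ℂ) ^ 2 / (ω ^ 2 * E)) := by
      field_simp
      ring
    have e3 : (t:ℂ) / I * ((0 * (ω - (t:ℂ) * E)
          - (c * ω - (t:ℂ) ^ 2) / ω ^ 2 * (0 - (t:ℂ) * (I * E))) / (ω - (t:ℂ) * E) ^ 2)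
        = (t:ℂ) ^ 2 * E * (c * ω - (t:ℂ) ^ 2) / (ω ^ 2 * (ω - (t:ℂ) * E) ^ 2) := by
      rw [div_mul_div_comm, div_eq_div_iff (mul_ne_zero Complex.I_ne_zero (pow_ne_zero 2 hu))
        (mul_ne_zero (pow_ne_zero 2 hω) (pow_ne_zero 2 hu))]
      field_simp
      ring
    have e4 : (t:ℂ) / I * ((c * ω - 2 * (t:ℂ) ^ 2) / ω ^ 3
          * ((0 - (t:ℂ) * (I * E) / ω) / (1 - (t:ℂ) * E / ω)))
        = -((t:ℂ) ^ 2 * E * (c * ω - 2 * (t:ℂ) ^ 2) / (ω ^ 3 * (ω - (t:ℂ) * E))) := by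
      rw [show (0 - (t:ℂ) * (I * E) / ω) / (1 - (t:ℂ) * E / ω)
          = -((t:ℂ) * (I * E)) / (ω - (t:ℂ) * E) from by
        rw [show 1 - (t:ℂ) * E / ω = (ω - (t:ℂ) * E) / ω from by field_simp,
          div_eq_div_iff (div_ne_zero hu hω) hu]
        field_simp
        ring]
      rw [div_mul_div_comm, div_mul_div_comm, ← neg_div,
        div_eq_div_iff (mul_ne_zero Complex.I_ne_zero (mul_ne_zero (pow_ne_zero 3 hω) hu))
          (mul_ne_zero (pow_ne_zero 3 hω) hu)]
      ring
    simp only [Pi.sub_apply, ← hEdef]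
    linear_combination eL + auxEq - e2 - e3 + e4
  have hcont : Continuous fun θ : ℝ => K (ω - t * Complex.exp (θ * Complex.I)) * (t:ℂ) := by
    apply Continuous.mul _ continuous_const
    unfold K
    apply Continuous.div
    · exact Complex.continuous_conj.comp (by fun_prop)
    · fun_prop
    · intro θ
      exact pow_ne_zero 2 (hωz θ)
  have hint : IntervalIntegrable (fun θ : ℝ => K (ω - t * Complex.exp (θ * Complex.I)) * (t:ℂ))
      MeasureTheory.volume 0 (2 * π) := hcont.intervalIntegrable _ _
  rw [intervalIntegral.integral_eq_sub_of_hasDerivAt (fun x _ => key x) hint]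
  have hexp : Complex.exp (((2 * π : ℝ) : ℂ) * I) = 1 := by
    push_cast
    exact Complex.exp_two_pi_mul_I
  rw [hg]
  simp only [hexp, Complex.exp_two_pi_mul_I, Complex.ofReal_zero, Complex.ofReal_mul,
    Complex.ofReal_ofNat, zero_mul, Complex.exp_zero, mul_one, mul_zero, add_zero]
  have hcω : c * ω = ((‖ω‖ : ℝ) : ℂ)^2 := by
    rw [hc, mul_comm, Complex.mul_conj]
    norm_cast
    exact (Complex.sq_norm ω).symm
  rw [hA, hcω]
  ring
end

section
/- For all real t ∈ (0,1), writing II = {ξ ∈ A(0,1) ∩ B(i,1) : arg(ξ) ∈ [0, π/6]}, the integral ∫_{II} Im K(-ξ) dm₂(ξ) is strictly positive, where K(z) = z̄/z². -/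
open MeasureTheory Metric Complex Real

/-- Planar Lebesgue measure normalized so that `m₂(B(0,1)) = 1`. -/
noncomputable def m2 : Measure ℂ := (ENNReal.ofReal π)⁻¹ • volume

/-- The annulus `A(0,1) = B(0,1) \ B(0,1/2)`. -/
def ann01 : Set ℂ := closedBall 0 1 \ closedBall 0 (1 / 2)

lemma K_im (z : ℂ) (hz : z ≠ 0) :
    (K (-z)).im = z.im * (3 * z.re ^ 2 - z.im ^ 2) / (z.re ^ 2 + z.im ^ 2) ^ 2 := by
  have h : z.re ^ 2 + z.im ^ 2 ≠ 0 := by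
    have := Complex.normSq_pos.2 hz
    rw [Complex.normSq_apply] at this
    nlinarith
  simp only [K, Complex.div_im, map_neg, pow_two, Complex.mul_re, Complex.mul_im,
    Complex.normSq_apply, Complex.conj_re, Complex.conj_im, Complex.neg_re, Complex.neg_im]
  have h' : z.re * z.re + z.im * z.im ≠ 0 := by rwa [← pow_two, ← pow_two]
  have e : (-z.re * -z.re - -z.im * -z.im) * (-z.re * -z.re - -z.im * -z.im) +
      (-z.re * -z.im + -z.im * -z.re) * (-z.re * -z.im + -z.im * -z.re) =
      (z.re ^ 2 + z.im ^ 2) ^ 2 := by ring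
  rw [e]
  field_simp
  ring

-- arcsin (1/2) = π/6
lemma arcsin_half : Real.arcsin (1/2) = π / 6 := by
  rw [← Real.sin_pi_div_six]
  exact Real.arcsin_sin (by linarith [Real.pi_pos]) (by linarith [Real.pi_pos])

-- direction 1: from arg bound to coordinate bound
lemma coord_of_arg {z : ℂ} (hz : z ≠ 0) (h0 : 0 ≤ Complex.arg z) (h6 : Complex.arg z ≤ π / 6) :
    0 ≤ z.im ∧ z.im ^ 2 ≤ 3 * z.re ^ 2 := by
  have him : 0 ≤ z.im := Complex.arg_nonneg_iff.1 h0
  have hre : 0 < z.re := by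
    have habs : |Complex.arg z| < π / 2 := by
      rw [abs_lt]; constructor <;> linarith [Real.pi_pos]
    rcases Complex.abs_arg_lt_pi_div_two_iff.1 habs with h | h
    · exact h
    · exact absurd h hz
  have habs : 0 < ‖z‖ := norm_pos_iff.mpr hz
  have harg : Complex.arg z = Real.arcsin (z.im / ‖z‖) :=
    Complex.arg_of_re_nonneg hre.le
  rw [harg] at h6
  have h2 : z.im / ‖z‖ ≤ 1/2 := by
    have := (Real.arcsin_le_iff_le_sin' (y := π/6)
      ⟨by linarith [Real.pi_pos], by linarith [Real.pi_pos]⟩).1 h6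
    rwa [Real.sin_pi_div_six] at this
  have h3 : z.im * 2 ≤ ‖z‖ := by
    rw [div_le_iff₀ habs] at h2; linarith
  have hsq := Complex.sq_norm z
  rw [Complex.normSq_apply] at hsq
  constructor
  · exact him
  · nlinarith [norm_nonneg z]

-- direction 2: coordinate bounds give arg bound
lemma arg_of_coord {z : ℂ} (hre : 0 < z.re) (him : 0 ≤ z.im) (h2 : 2 * z.im ≤ ‖z‖) :
    Complex.arg z ≤ π / 6 := by
  have habs : 0 < ‖z‖ := by
    apply norm_pos_iff.mpr; intro h; rw [h] at hre; simp at hre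
  rw [Complex.arg_of_re_nonneg hre.le, ← arcsin_half]
  exact Real.monotone_arcsin (by rw [div_le_iff₀ habs]; linarith)

theorem stmt6 : ∀ t : ℝ, t ∈ Set.Ioo (0:ℝ) 1 →
    0 < ∫ ξ in {ξ : ℂ | ξ ∈ ann01 ∩ closedBall Complex.I 1 ∧
        Complex.arg ξ ∈ Set.Icc 0 (π / 6)}, (K (-ξ)).im ∂m2 := by
  intro t ht
  set f : ℂ → ℝ := fun ξ => (K (-ξ)).im with hf
  set s : Set ℂ := {ξ : ℂ | ξ ∈ ann01 ∩ closedBall Complex.I 1 ∧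
      Complex.arg ξ ∈ Set.Icc 0 (π / 6)} with hsdef
  -- basic facts about members of s
  have hne : ∀ ξ ∈ s, ξ ≠ 0 := by
    rintro ξ ⟨⟨⟨-, h2⟩, -⟩, -⟩ rfl
    exact h2 (mem_closedBall_self (by norm_num))
  -- measurability of s
  have hmeas_s : MeasurableSet s := by
    have : s = (ann01 ∩ closedBall Complex.I 1) ∩ (Complex.arg ⁻¹' Set.Icc 0 (π/6)) := rfl
    rw [this]
    exact ((measurableSet_closedBall.diff measurableSet_closedBall).inter
      measurableSet_closedBall).inter (Complex.measurable_arg measurableSet_Icc)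
  -- nonnegativity of f on s
  have hnonneg : ∀ ξ ∈ s, 0 ≤ f ξ := by
    intro ξ hξ
    have hz := hne ξ hξ
    obtain ⟨-, h0, h6⟩ := hξ
    obtain ⟨him, hsq⟩ := coord_of_arg hz h0 h6
    show 0 ≤ (K (-ξ)).im
    rw [K_im ξ hz]
    have hd : (0:ℝ) < (ξ.re ^ 2 + ξ.im ^ 2) ^ 2 := by
      have := Complex.normSq_pos.2 hz
      rw [Complex.normSq_apply] at this
      nlinarith
    apply div_nonneg _ hd.le
    nlinarith
  -- f is measurable
  have hfm : Measurable f := by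
    apply Complex.measurable_im.comp
    unfold K
    exact (Complex.continuous_conj.measurable.comp measurable_neg).div
      ((measurable_neg).pow_const 2)
  -- integrability
  have hint : IntegrableOn f s volume := by
    apply Measure.integrableOn_of_bounded (M := 2)
    · exact ne_of_lt (lt_of_le_of_lt (measure_mono (fun ξ hξ => hξ.1.1.1))
        measure_closedBall_lt_top)
    · exact hfm.aestronglyMeasurable
    · rw [ae_restrict_iff' hmeas_s]
      filter_upwards with ξ hξ
      have hz := hne ξ hξ
      obtain ⟨⟨⟨h1, h2⟩, -⟩, -⟩ := hξ
      have habs : 1/2 < ‖ξ‖ := by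
        by_contra h
        exact h2 (by simpa [mem_closedBall, Complex.dist_eq] using le_of_not_gt h)
      have h3 : ‖f ξ‖ ≤ ‖K (-ξ)‖ := Complex.abs_im_le_norm _
      have h4 : ‖K (-ξ)‖ = ‖ξ‖⁻¹ := by
        rw [K, norm_div, norm_pow]
        simp [Complex.norm_conj]
        rw [pow_two]
        field_simp
      rw [h4] at h3
      refine h3.trans ?_
      rw [inv_le_comm₀ (by linarith) (by norm_num)]
      linarith
  -- positivity of the support measure
  set ξ₀ : ℂ := ⟨18/25, 19/50⟩ with hξ₀
  have hball : ball ξ₀ (1/100) ⊆ Function.support f ∩ s := by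
    intro ξ hξ
    have hd : ‖ξ - ξ₀‖ < 1/100 := by rwa [mem_ball, Complex.dist_eq] at hξ
    have hre : |ξ.re - 18/25| < 1/100 := by
      have := (Complex.abs_re_le_norm (ξ - ξ₀)).trans_lt hd
      simpa [Complex.sub_re, hξ₀] using this
    have him : |ξ.im - 19/50| < 1/100 := by
      have := (Complex.abs_im_le_norm (ξ - ξ₀)).trans_lt hd
      simpa [Complex.sub_im, hξ₀] using this
    rw [abs_lt] at hre him
    have hre1 : 0.71 < ξ.re := by linarith
    have hre2 : ξ.re < 0.73 := by linarith
    have him1 : 0.37 < ξ.im := by linarith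
    have him2 : ξ.im < 0.39 := by linarith
    have hsq := Complex.sq_norm ξ
    rw [Complex.normSq_apply] at hsq
    have habsnn := norm_nonneg ξ
    have habs_lb : 0.78 < ‖ξ‖ := by nlinarith
    have habs_ub : ‖ξ‖ < 0.9 := by nlinarith
    have hz : ξ ≠ 0 := by
      intro h; rw [h] at hre1; norm_num at hre1
    have hmem : ξ ∈ s := by
      refine ⟨⟨⟨?_, ?_⟩, ?_⟩, ?_, ?_⟩
      · rw [mem_closedBall, Complex.dist_eq, sub_zero]; linarith
      · rw [mem_closedBall, Complex.dist_eq, sub_zero]; intro h; linarith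
      · rw [mem_closedBall, Complex.dist_eq]
        have h5 : ‖ξ - Complex.I‖ ^ 2 = ξ.re^2 + (ξ.im - 1)^2 := by
          rw [Complex.sq_norm, Complex.normSq_apply]
          simp [Complex.sub_re, Complex.sub_im]
          ring
        nlinarith [norm_nonneg (ξ - Complex.I)]
      · exact Complex.arg_nonneg_iff.2 (by linarith)
      · exact arg_of_coord (by linarith) (by linarith) (by linarith)
    refine ⟨?_, hmem⟩
    rw [Function.mem_support]
    show (K (-ξ)).im ≠ 0
    rw [K_im ξ hz]
    have hposd : 0 < ξ.re ^ 2 + ξ.im ^ 2 := by nlinarith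
    have : 0 < ξ.im * (3 * ξ.re ^ 2 - ξ.im ^ 2) / (ξ.re ^ 2 + ξ.im ^ 2) ^ 2 := by
      apply div_pos (by nlinarith) (pow_pos hposd 2)
    exact ne_of_gt this
  have hsupp : 0 < volume (Function.support f ∩ s) :=
    lt_of_lt_of_le (measure_ball_pos volume ξ₀ (by norm_num)) (measure_mono hball)
  -- put everything together
  have hmain : 0 < ∫ ξ in s, f ξ ∂volume := by
    rw [setIntegral_pos_iff_support_of_nonneg_ae ?_ hint]
    · exact hsupp
    · rw [Filter.EventuallyLE, ae_restrict_iff' hmeas_s]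
      filter_upwards with ξ hξ
      exact hnonneg ξ hξ
  rw [m2, Measure.restrict_smul, integral_smul_measure, smul_eq_mul]
  apply mul_pos _ hmain
  rw [ENNReal.toReal_inv, ENNReal.toReal_ofReal Real.pi_pos.le]
  exact inv_pos.2 Real.pi_pos
end

section
/- Let (r_n) be a decreasing sequence with r₀ = 1, r_{n+1} < r_n/100. Suppose E ⊂ ℂ is a set such that for every n ≥ 1 and every z ∈ ℂ, 𝓗¹(E ∩ B(z, (1/4)√(r_n r_{n-1}))) ≤ 2r_n. If moreover √(r_n/r_{n-1}) → 0 as n → ∞, then 𝓗¹(E ∩ Γ) = 0 for every rectifiable curve Γ. -/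
open MeasureTheory Metric Complex Filter

theorem stmt14 (r : ℕ → ℝ) (hpos : ∀ n, 0 < r n) (h0 : r 0 = 1)
    (hdec : ∀ n, r (n + 1) < r n / 100)
    (hratio : Tendsto (fun n => Real.sqrt (r (n + 1) / r n)) atTop (nhds 0))
    (E : Set ℂ)
    (hE : ∀ n : ℕ, 1 ≤ n → ∀ z : ℂ,
      μH[1] (E ∩ closedBall z ((1 / 4) * Real.sqrt (r n * r (n - 1))))
        ≤ ENNReal.ofReal (2 * r n)) :
    ∀ (L : NNReal) (γ : ℝ → ℂ), LipschitzOnWith L γ (Set.Icc 0 1) →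
      μH[1] (E ∩ γ '' Set.Icc 0 1) = 0 := by
  intro L γ hγ
  have key : ∀ n : ℕ, μH[1] (E ∩ γ '' Set.Icc 0 1)
      ≤ ENNReal.ofReal (8 * L * Real.sqrt (r (n+1) / r n) + 6 * r (n+1)) := by
    intro n
    have hs1 : (0:ℝ) < Real.sqrt (r (n+1) * r n) :=
      Real.sqrt_pos.mpr (mul_pos (hpos _) (hpos _))
    set ρ : ℝ := (1/4) * Real.sqrt (r (n+1) * r n) with hρdef
    have hρpos : 0 < ρ := by positivity
    set N : ℕ := ⌈(L:ℝ)/ρ⌉₊ + 1 with hN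
    have hNpos : (0:ℝ) < (N:ℝ) := by positivity
    have hLN : (L:ℝ) / N ≤ ρ := by
      rw [div_le_iff₀ hNpos]
      have h1 : (L:ℝ)/ρ ≤ (N:ℝ) := by
        refine le_trans (Nat.le_ceil _) ?_
        exact_mod_cast Nat.le_succ _
      calc (L:ℝ) = ((L:ℝ)/ρ) * ρ := by field_simp
        _ ≤ N * ρ := mul_le_mul_of_nonneg_right h1 hρpos.le
        _ = ρ * N := mul_comm _ _
    have hcover : γ '' Set.Icc 0 1 ⊆
        ⋃ k ∈ Finset.range (N+1), closedBall (γ ((k:ℝ) / N)) ρ := by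
      rintro w ⟨t, ⟨ht0, ht1⟩, rfl⟩
      set k : ℕ := ⌊t * N⌋₊ with hk
      have htN : t * N ≤ (N:ℝ) := by nlinarith
      have hkN : k ≤ N := by
        have := Nat.floor_le_floor htN
        simpa [hk] using this
      have hkt : (k:ℝ) / N ≤ t := by
        rw [div_le_iff₀ hNpos]
        exact Nat.floor_le (by positivity)
      have htk : t - (k:ℝ)/N ≤ 1 / N := by
        have hlt : t * N < (k:ℝ) + 1 := by exact_mod_cast Nat.lt_floor_add_one (t * N)
        rw [sub_le_iff_le_add, ← add_div, le_div_iff₀ hNpos]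
        linarith
      have hmem : (k:ℝ)/N ∈ Set.Icc (0:ℝ) 1 := by
        constructor
        · positivity
        · rw [div_le_one hNpos]; exact_mod_cast hkN
      have hdist : dist (γ t) (γ ((k:ℝ)/N)) ≤ ρ := by
        have h1 := hγ.dist_le_mul t ⟨ht0, ht1⟩ ((k:ℝ)/N) hmem
        have h2 : dist t ((k:ℝ)/N) ≤ 1/N := by
          rw [Real.dist_eq, abs_le]
          constructor
          · nlinarith [one_div_pos.mpr hNpos]
          · linarith
        calc dist (γ t) (γ ((k:ℝ)/N)) ≤ L * dist t ((k:ℝ)/N) := h1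
          _ ≤ L * (1/N) := by
              exact mul_le_mul_of_nonneg_left h2 L.coe_nonneg
          _ = (L:ℝ)/N := by ring
          _ ≤ ρ := hLN
      simp only [Set.mem_iUnion, Finset.mem_range]
      exact ⟨k, Nat.lt_succ_of_le hkN, mem_closedBall.mpr hdist⟩
    have hmeas : μH[1] (E ∩ γ '' Set.Icc 0 1)
        ≤ (N+1 : ℕ) * ENNReal.ofReal (2 * r (n+1)) := by
      calc μH[1] (E ∩ γ '' Set.Icc 0 1)
          ≤ μH[1] (⋃ k ∈ Finset.range (N+1), E ∩ closedBall (γ ((k:ℝ)/N)) ρ) := by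
            refine measure_mono ?_
            intro x ⟨hxE, hxΓ⟩
            obtain ⟨k, hk1, hk2⟩ := by simpa only [Set.mem_iUnion] using hcover hxΓ
            simp only [Set.mem_iUnion]
            exact ⟨k, hk1, hxE, hk2⟩
        _ ≤ ∑ k ∈ Finset.range (N+1), μH[1] (E ∩ closedBall (γ ((k:ℝ)/N)) ρ) :=
            measure_biUnion_finset_le _ _
        _ ≤ ∑ k ∈ Finset.range (N+1), ENNReal.ofReal (2 * r (n+1)) := by
            refine Finset.sum_le_sum fun k _ => ?_
            have h := hE (n+1) (by omega) (γ ((k:ℝ)/N))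
            rw [hρdef]
            exact h
        _ = (N+1 : ℕ) * ENNReal.ofReal (2 * r (n+1)) := by
            simp [Finset.sum_const, nsmul_eq_mul]
    refine hmeas.trans ?_
    rw [← ENNReal.ofReal_natCast (N+1), ← ENNReal.ofReal_mul (by positivity)]
    refine ENNReal.ofReal_le_ofReal ?_
    -- arithmetic
    have hceil : ((N:ℝ)) ≤ (L:ℝ)/ρ + 2 := by
      have h := Nat.ceil_lt_add_one (show (0:ℝ) ≤ (L:ℝ)/ρ by positivity)
      have : (N:ℝ) = (⌈(L:ℝ)/ρ⌉₊ : ℝ) + 1 := by exact_mod_cast rfl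
      linarith
    have ha : (0:ℝ) < Real.sqrt (r (n+1)) := Real.sqrt_pos.mpr (hpos _)
    have hb : (0:ℝ) < Real.sqrt (r n) := Real.sqrt_pos.mpr (hpos _)
    have h1 : Real.sqrt (r (n+1) * r n) = Real.sqrt (r (n+1)) * Real.sqrt (r n) :=
      Real.sqrt_mul (hpos _).le _
    have h2 : Real.sqrt (r (n+1) / r n) = Real.sqrt (r (n+1)) / Real.sqrt (r n) :=
      Real.sqrt_div (hpos _).le _
    have h3 : Real.sqrt (r (n+1)) ^ 2 = r (n+1) := Real.sq_sqrt (hpos _).le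
    have hρeq : 2*(L:ℝ)*r (n+1)/ρ = 8*(L:ℝ)*Real.sqrt (r (n+1)/r n) := by
      rw [hρdef, h1, h2]
      set a := Real.sqrt (r (n+1)) with hadef
      set b := Real.sqrt (r n) with hbdef
      rw [← h3]
      field_simp
      ring
    have hN1 : ((N:ℝ)+1) ≤ (L:ℝ)/ρ + 3 := by linarith
    calc ((N+1 : ℕ):ℝ) * (2 * r (n+1)) = ((N:ℝ)+1) * (2 * r (n+1)) := by push_cast; ring
      _ ≤ ((L:ℝ)/ρ + 3) * (2 * r (n+1)) := by nlinarith [hpos (n+1)]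
      _ = 2*(L:ℝ)*r (n+1)/ρ + 6 * r (n+1) := by ring
      _ = 8 * L * Real.sqrt (r (n+1) / r n) + 6 * r (n+1) := by rw [hρeq]
  -- limit
  have hrle : ∀ n, r n ≤ (1/2:ℝ)^n := by
    intro n
    induction n with
    | zero => simp [h0]
    | succ m ih =>
      have h100 : r m / 100 ≤ (1/2)^m / 100 := by linarith
      have hp : (0:ℝ) < (1/2:ℝ)^m := by positivity
      calc r (m+1) ≤ r m / 100 := (hdec m).le
        _ ≤ (1/2)^m / 100 := h100
        _ ≤ (1/2)^(m+1) := by rw [pow_succ]; nlinarith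
  have hr0 : Tendsto r atTop (nhds 0) :=
    squeeze_zero (fun n => (hpos n).le) hrle
      (tendsto_pow_atTop_nhds_zero_of_lt_one (by norm_num) (by norm_num))
  have hc : Tendsto (fun n => 8*(L:ℝ)*Real.sqrt (r (n+1)/r n) + 6*r (n+1)) atTop (nhds 0) := by
    have h1 := hratio.const_mul (8*(L:ℝ))
    have h2 := (hr0.comp (tendsto_add_atTop_nat 1)).const_mul (6:ℝ)
    have := h1.add h2
    simpa [Function.comp, mul_comm] using this
  have htnd : Tendsto (fun n => ENNReal.ofReal (8*(L:ℝ)*Real.sqrt (r (n+1)/r n) + 6*r (n+1)))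
      atTop (nhds 0) := by
    have := ENNReal.tendsto_ofReal hc
    simpa using this
  have hle : μH[1] (E ∩ γ '' Set.Icc 0 1) ≤ 0 := ge_of_tendsto' htnd key
  exact le_zero_iff.mp hle
end
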